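/- Fix a natural number n and let P₀([n]) be the poset of nonempty subsets of [n] = {0, …, n}, viewed as a category via inclusions. Let RedFun_n denote the full subcategory of Fun(P₀([n]), TopCat) spanned by the reduced punctured cubes, i.e. diagrams whose value at every singleton {j} is a terminal (one-point) space. Let L_n : TopCat ⥤ RedFun_n be the functor sending a space X to the diagram S ↦ X ∗ S, where X ∗ S is the join model given by the pushout of the span S ← X × S → X × Δ^S (here S carries the discrete topology, X × S → S is the projection, and X × S → X × Δ^S is id_X times the inclusion of the vertices of Δ^S), with structure maps induced by the face inclusions Δ^S ↪ Δ^T and the inclusions S ↪ T. Then L_n admits a right adjoint R_n : RedFun_n ⥤ TopCat. (Consequently the composite R_n ∘ L_n — the functor T_n𝕀 of Goodwillie calculus, and Hopkins's functor used to define symmetric LS cocategory — inherits the structure of a monad on TopCat from the adjunction.) -/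

import Mathlib

open CategoryTheory Limits

/-- The poset `P₀([n])` of nonempty subsets of `[n] = {0, …, n}`, viewed as a category
via inclusions. -/
abbrev PosetP0 (n : ℕ) := {S : Finset (Fin (n + 1)) // S.Nonempty}

/-- The singleton `{j}` as an object of `P₀([n])`. -/
def singletonObj (n : ℕ) (j : Fin (n + 1)) : PosetP0 n :=
  ⟨{j}, Finset.singleton_nonempty j⟩

/-- A punctured `(n+1)`-cube `𝒳 : P₀([n]) ⥤ C` is reduced if its value at every
singleton is a terminal object. -/
def IsReducedCube {C : Type*} [Category C] {n : ℕ} (𝒳 : PosetP0 n ⥤ C) : Prop :=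
  ∀ j : Fin (n + 1), Nonempty (IsTerminal (𝒳.obj (singletonObj n j)))

/-- The topological standard simplex `Δ^S` on vertex set `S ⊆ [n]`: probability vectors
on `[n]` supported in `S` (the ambient model of `{t : S → ℝ | t ≥ 0, ∑ t = 1} ⊆ ℝ^S`,
realized inside `ℝ^{[n]}` so that face inclusions are literally extensions by zero). -/
def simplexOn (n : ℕ) (S : Finset (Fin (n + 1))) : TopCat :=
  TopCat.of {t : Fin (n + 1) → ℝ //
    (∀ i, 0 ≤ t i) ∧ (∀ i, i ∉ S → t i = 0) ∧ ∑ i, t i = 1}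

/-- The face inclusion `Δ^S ↪ Δ^T` induced by an inclusion `S ⊆ T`. -/
def faceIncl {n : ℕ} {S T : Finset (Fin (n + 1))} (h : S ⊆ T) :
    simplexOn n S ⟶ simplexOn n T :=
  TopCat.ofHom ⟨fun t => ⟨t.val, t.2.1, fun i hi => t.2.2.1 i (fun hS => hi (h hS)), t.2.2.2⟩,
    Continuous.subtype_mk continuous_subtype_val _⟩

/-- The finite set `S`, as a discrete topological space. -/
def vert (n : ℕ) (S : PosetP0 n) : TopCat := TopCat.discrete.obj ↥(S.val)

/-- The map of discrete vertex spaces induced by an inclusion `S ⊆ T`. -/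
def vertMap {n : ℕ} {S T : PosetP0 n} (f : S ⟶ T) : vert n S ⟶ vert n T :=
  TopCat.discrete.map (TypeCat.ofHom (fun (j : ↥(S.val)) => (⟨j.val, leOfHom f j.2⟩ : ↥(T.val))))

/-- The vertex `e_j ∈ Δ^S` attached to `j ∈ S`. -/
def vertexPt {n : ℕ} (S : PosetP0 n) (j : ↥(S.val)) : ↑(simplexOn n S.val) :=
  ⟨fun i => if i = j.val then 1 else 0,
    fun i => by dsimp only; split <;> norm_num,
    fun i hi => by
      dsimp only; rw [if_neg]; rintro rfl; exact hi j.2,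
    by simp⟩

/-- The product `X × S` (with `S` discrete), the corner of the join span. -/
def prodVertObj (n : ℕ) (X : TopCat) (S : PosetP0 n) : TopCat :=
  TopCat.of (↑X × ↑(vert n S))

/-- The product `X × Δ^S`. -/
def prodSimplexObj (n : ℕ) (X : TopCat) (S : PosetP0 n) : TopCat :=
  TopCat.of (↑X × ↑(simplexOn n S.val))

/-- The projection `X × S → S` (left leg of the join span). -/
def spanProj (n : ℕ) (X : TopCat) (S : PosetP0 n) : prodVertObj n X S ⟶ vert n S :=
  ConcreteCategory.ofHom (C := TopCat) ⟨Prod.snd, continuous_snd⟩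

/-- The map `X × S → X × Δ^S`, `id_X` times the inclusion of the vertices
(right leg of the join span). -/
def spanIncl (n : ℕ) (X : TopCat) (S : PosetP0 n) :
    prodVertObj n X S ⟶ prodSimplexObj n X S :=
  TopCat.ofHom (ContinuousMap.prodMap (ContinuousMap.id ↑X)
    (@ContinuousMap.mk ↑(vert n S) _ ⊥ _ (fun j => vertexPt S j) continuous_bot))

/-- `id_X × (face inclusion)` on `X × Δ^S`. -/
def prodFaceMap (n : ℕ) (X : TopCat) {S T : PosetP0 n} (f : S ⟶ T) :
    prodSimplexObj n X S ⟶ prodSimplexObj n X T :=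
  TopCat.ofHom (ContinuousMap.prodMap (ContinuousMap.id ↑X) (faceIncl (leOfHom f)).hom)

/-- `id_X × (vertex-set inclusion)` on `X × S`. -/
def prodVertMap (n : ℕ) (X : TopCat) {S T : PosetP0 n} (f : S ⟶ T) :
    prodVertObj n X S ⟶ prodVertObj n X T :=
  TopCat.ofHom (ContinuousMap.prodMap (ContinuousMap.id ↑X) (vertMap f).hom)

/-- `f × id_{Δ^S}` on `X × Δ^S`, for `f : X ⟶ Y`. -/
def prodSimplexLeft (n : ℕ) {X Y : TopCat} (f : X ⟶ Y) (S : PosetP0 n) :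
    prodSimplexObj n X S ⟶ prodSimplexObj n Y S :=
  TopCat.ofHom (ContinuousMap.prodMap f.hom (ContinuousMap.id ↑(simplexOn n S.val)))

/-- `f × id_S` on `X × S`, for `f : X ⟶ Y`. -/
def prodVertLeft (n : ℕ) {X Y : TopCat} (f : X ⟶ Y) (S : PosetP0 n) :
    prodVertObj n X S ⟶ prodVertObj n Y S :=
  TopCat.ofHom (ContinuousMap.prodMap f.hom (ContinuousMap.id ↑(vert n S)))

/-- The punctured cube `S ↦ X ∗ S`, where `X ∗ S` is the join model given by the pushout
of the span `S ← X × S → X × Δ^S`, with structure maps induced by the face inclusions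
`Δ^S ↪ Δ^T` and the inclusions `S ↪ T`. -/
noncomputable def joinCube (n : ℕ) (X : TopCat) : PosetP0 n ⥤ TopCat where
  obj S := pushout (spanProj n X S) (spanIncl n X S)
  map {S T} f :=
    pushout.map (spanProj n X S) (spanIncl n X S) (spanProj n X T) (spanIncl n X T)
      (vertMap f) (prodFaceMap n X f) (prodVertMap n X f)
      (by ext p; rfl) (by ext p <;> rfl)
  map_id S := by
    have h1 : vertMap (𝟙 S) = 𝟙 (vert n S) := by ext j; rfl
    have h2 : prodFaceMap n X (𝟙 S) = 𝟙 (prodSimplexObj n X S) := by ext p <;> rfl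
    apply pushout.hom_ext <;> simp [h1, h2]
  map_comp {S T U} f g := by
    have h1 : vertMap (f ≫ g) = vertMap f ≫ vertMap g := by ext j; rfl
    have h2 : prodFaceMap n X (f ≫ g) = prodFaceMap n X f ≫ prodFaceMap n X g := by
      ext p <;> rfl
    apply pushout.hom_ext
    · rw [pushout.inl_desc, pushout.inl_desc_assoc, Category.assoc, pushout.inl_desc, h1,
        Category.assoc]
    · rw [pushout.inr_desc, pushout.inr_desc_assoc, Category.assoc, pushout.inr_desc, h2,
        Category.assoc]

/-- The natural transformation `X ∗ (-) ⟶ Y ∗ (-)` induced by `f : X ⟶ Y`. -/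
noncomputable def joinCubeMap (n : ℕ) {X Y : TopCat} (f : X ⟶ Y) :
    joinCube n X ⟶ joinCube n Y where
  app S :=
    pushout.map (spanProj n X S) (spanIncl n X S) (spanProj n Y S) (spanIncl n Y S)
      (𝟙 (vert n S)) (prodSimplexLeft n f S) (prodVertLeft n f S)
      (by ext p; rfl) (by ext p <;> rfl)
  naturality := by
    intro S T g
    have h1 : vertMap g ≫ 𝟙 (vert n T) = 𝟙 (vert n S) ≫ vertMap g := by ext j; rfl
    have h2 : prodFaceMap n X g ≫ prodSimplexLeft n f T =
        prodSimplexLeft n f S ≫ prodFaceMap n Y g := by ext p <;> rfl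
    dsimp [joinCube]
    apply pushout.hom_ext
    · rw [pushout.inl_desc_assoc, Category.assoc, pushout.inl_desc, pushout.inl_desc_assoc,
        Category.assoc, pushout.inl_desc]
      simp only [Category.id_comp, Category.comp_id]
    · rw [pushout.inr_desc_assoc, Category.assoc, pushout.inr_desc, pushout.inr_desc_assoc,
        Category.assoc, pushout.inr_desc, reassoc_of% h2]

/-- The functor `TopCat ⥤ Fun(P₀([n]), TopCat)` sending `X` to the join diagram
`S ↦ X ∗ S` (pushout model), functorially in `X`. -/
noncomputable def joinCubeFunctor (n : ℕ) : TopCat ⥤ (PosetP0 n ⥤ TopCat) where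
  obj X := joinCube n X
  map f := joinCubeMap n f
  map_id X := by
    apply NatTrans.ext; funext S
    have h2 : prodSimplexLeft n (𝟙 X) S = 𝟙 (prodSimplexObj n X S) := by ext p <;> rfl
    dsimp [joinCubeMap]
    apply pushout.hom_ext <;> simp [h2] <;> rfl
  map_comp {X Y Z} f g := by
    apply NatTrans.ext; funext S
    have h2 : prodSimplexLeft n (f ≫ g) S =
        prodSimplexLeft n f S ≫ prodSimplexLeft n g S := by ext p <;> rfl
    dsimp [joinCubeMap, joinCube]
    apply pushout.hom_ext
    · rw [pushout.inl_desc, pushout.inl_desc_assoc, Category.assoc, pushout.inl_desc] <;>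
        simp only [Category.id_comp]
    · rw [pushout.inr_desc, pushout.inr_desc_assoc, Category.assoc, pushout.inr_desc, h2,
        Category.assoc]

section Aux

/-- A `TopCat` object with a unique point is terminal. -/
def isTerminalOfUnique (Z : TopCat) [Unique ↑Z] : IsTerminal Z :=
  IsTerminal.ofUniqueHom (fun _ => TopCat.ofHom ⟨fun _ => default, continuous_const⟩)
    (fun Y m => by ext y; exact Subsingleton.elim _ _)

/-- Any two points of a terminal object of `TopCat` are equal. -/
theorem eq_of_isTerminal {Z : TopCat} (h : IsTerminal Z) (a b : ↑Z) : a = b := by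
  have : (TopCat.ofHom ⟨fun _ => a, continuous_const⟩ : TopCat.of PUnit ⟶ Z) =
      TopCat.ofHom ⟨fun _ => b, continuous_const⟩ := h.hom_ext _ _
  exact congrFun (congrArg (fun f => (f : TopCat.of PUnit ⟶ Z).hom.toFun) this) PUnit.unit

instance uniqueSingletonCoe (n : ℕ) (j : Fin (n + 1)) :
    Unique ↥((singletonObj n j).val) :=
  ⟨⟨⟨j, Finset.mem_singleton_self j⟩⟩, fun a => Subtype.ext (Finset.mem_singleton.mp a.2)⟩

instance uniqueSimplexSingleton (n : ℕ) (j : Fin (n + 1)) :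
    Unique ↑(simplexOn n {j}) := by
  refine ⟨⟨vertexPt (singletonObj n j) ⟨j, Finset.mem_singleton_self j⟩⟩, ?_⟩
  rintro ⟨t, h0, hsupp, hsum⟩
  have hj : t j = 1 := by
    rw [← hsum]
    rw [Finset.sum_eq_single j]
    · intro i _ hij; exact hsupp i (by simp [hij])
    · intro h; exact absurd (Finset.mem_univ j) h
  apply Subtype.ext
  funext i
  show t i = (vertexPt (singletonObj n j) ⟨j, Finset.mem_singleton_self j⟩).val i
  show t i = if i = j then 1 else 0
  by_cases hij : i = j
  · simp [hij, hj]
  · simp [hij, hsupp i (by simp [hij])]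

instance compactSimplex (n : ℕ) (S : Finset (Fin (n + 1))) :
    CompactSpace ↑(simplexOn n S) := by
  have hsub : {t : Fin (n + 1) → ℝ |
      (∀ i, 0 ≤ t i) ∧ (∀ i, i ∉ S → t i = 0) ∧ ∑ i, t i = 1} ⊆
      Set.pi Set.univ fun _ => Set.Icc (0:ℝ) 1 := by
    rintro t ⟨h0, _, hsum⟩ i _
    refine ⟨h0 i, ?_⟩
    calc t i ≤ ∑ k, t k := Finset.single_le_sum (fun k _ => h0 k) (Finset.mem_univ i)
    _ = 1 := hsum
  have hclosed : IsClosed {t : Fin (n + 1) → ℝ |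
      (∀ i, 0 ≤ t i) ∧ (∀ i, i ∉ S → t i = 0) ∧ ∑ i, t i = 1} := by
    have e : {t : Fin (n + 1) → ℝ |
        (∀ i, 0 ≤ t i) ∧ (∀ i, i ∉ S → t i = 0) ∧ ∑ i, t i = 1} =
        (⋂ i, {t : Fin (n + 1) → ℝ | 0 ≤ t i}) ∩
        ((⋂ i ∈ Sᶜ, {t : Fin (n + 1) → ℝ | t i = 0}) ∩
          {t : Fin (n + 1) → ℝ | ∑ i, t i = 1}) := by
      ext t; simp [Set.mem_iInter, and_assoc, Finset.mem_compl]
    rw [e]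
    refine IsClosed.inter ?_ (IsClosed.inter ?_ ?_)
    · exact isClosed_iInter fun i =>
        isClosed_le continuous_const (continuous_apply i)
    · exact isClosed_iInter fun i => isClosed_iInter fun _ =>
        isClosed_eq (continuous_apply i) continuous_const
    · exact isClosed_eq (by continuity) continuous_const
  have : IsCompact {t : Fin (n + 1) → ℝ |
      (∀ i, 0 ≤ t i) ∧ (∀ i, i ∉ S → t i = 0) ∧ ∑ i, t i = 1} :=
    (isCompact_univ_pi fun _ => isCompact_Icc).of_isClosed_subset hclosed hsub
  exact isCompact_iff_compactSpace.mp this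

end Aux
section Aux2

instance (n : ℕ) (j : Fin (n + 1)) : Unique ↑(vert n (singletonObj n j)) :=
  uniqueSingletonCoe n j

instance (n : ℕ) (j : Fin (n + 1)) : Unique ↑(simplexOn n (singletonObj n j).val) :=
  uniqueSimplexSingleton n j

/-- At a singleton, the right leg of the join span is an isomorphism. -/
noncomputable def spanInclIsoSingleton (n : ℕ) (X : TopCat) (j : Fin (n + 1)) :
    prodVertObj n X (singletonObj n j) ≅ prodSimplexObj n X (singletonObj n j) where
  hom := spanIncl n X (singletonObj n j)
  inv := TopCat.ofHom ⟨fun p => (p.1, default), (continuous_fst.prodMk continuous_const)⟩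
  hom_inv_id := by
    ext p
    exact Prod.ext rfl (Subsingleton.elim _ _)
  inv_hom_id := by
    ext p
    exact Prod.ext rfl (Subsingleton.elim _ _)

theorem spanIncl_eq_hom (n : ℕ) (X : TopCat) (j : Fin (n + 1)) :
    spanIncl n X (singletonObj n j) = (spanInclIsoSingleton n X j).hom := rfl

/-- If the right leg of a span is an isomorphism, the pushout is isomorphic to the
left object; hence for singletons the join is a point. -/
noncomputable def joinCubeSingletonIsColimit (n : ℕ) (X : TopCat) (j : Fin (n + 1)) :
    IsColimit (PushoutCocone.mk (f := spanProj n X (singletonObj n j))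
      (g := spanIncl n X (singletonObj n j))
      (𝟙 (vert n (singletonObj n j)))
      ((spanInclIsoSingleton n X j).inv ≫ spanProj n X (singletonObj n j))
      (by rw [Category.comp_id, spanIncl_eq_hom, Iso.hom_inv_id_assoc])) := by
  refine PushoutCocone.IsColimit.mk _ (fun s => s.inl) ?_ ?_ ?_
  · intro s; simp
  · intro s
    rw [Category.assoc, s.condition]
    exact Iso.inv_hom_id_assoc (spanInclIsoSingleton n X j) s.inr
  · intro s m h1 _
    simpa using h1

/-- The join cube is reduced. -/
theorem joinCube_isReduced (n : ℕ) (X : TopCat) : IsReducedCube (joinCube n X) := by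
  intro j
  have h1 : IsTerminal (vert n (singletonObj n j)) := isTerminalOfUnique _
  have e : vert n (singletonObj n j) ≅
      (joinCube n X).obj (singletonObj n j) :=
    (colimit.isoColimitCocone ⟨_, joinCubeSingletonIsColimit n X j⟩).symm
  exact ⟨h1.ofIso e⟩

end Aux2
section Aux3

/-- Elementwise evaluation of a commuting square in `TopCat`. -/
theorem elemwise {A B B' C : TopCat} {f : A ⟶ B} {g : B ⟶ C} {f' : A ⟶ B'} {g' : B' ⟶ C}
    (w : f ≫ g = f' ≫ g') (x : ↑A) : g (f x) = g' (f' x) := by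
  have := congrArg (fun (k : A ⟶ C) => k x) w
  exact this

variable {n : ℕ}

/-- The distinguished point of the (terminal) value of a reduced cube at a singleton. -/
noncomputable def redPt (F : PosetP0 n ⥤ TopCat) (hF : IsReducedCube F)
    (j : Fin (n + 1)) : ↑(F.obj (singletonObj n j)) :=
  ((hF j).some.from (TopCat.of PUnit)) PUnit.unit

theorem redPt_unique (F : PosetP0 n ⥤ TopCat) (hF : IsReducedCube F)
    (j : Fin (n + 1)) (q : ↑(F.obj (singletonObj n j))) : q = redPt F hF j :=
  eq_of_isTerminal (hF j).some q _

/-- The inclusion `{j} ⟶ S` in `P₀([n])`. -/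
def singHom (S : PosetP0 n) (j : ↥S.val) : singletonObj n j.val ⟶ S :=
  homOfLE (by exact Finset.singleton_subset_iff.mpr j.2)

/-- The canonical point of `F(S)` attached to a vertex `j ∈ S`. -/
noncomputable def cPt (F : PosetP0 n ⥤ TopCat) (hF : IsReducedCube F)
    (S : PosetP0 n) (j : ↥S.val) : ↑(F.obj S) :=
  F.map (singHom S j) (redPt F hF j.val)

theorem cPt_map (F : PosetP0 n ⥤ TopCat) (hF : IsReducedCube F)
    {S T : PosetP0 n} (f : S ⟶ T) (j : ↥S.val) :
    F.map f (cPt F hF S j) = cPt F hF T ⟨j.val, leOfHom f j.2⟩ := by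
  show F.map f (F.map (singHom S j) _) = F.map (singHom T _) _
  have h1 : F.map (singHom S j) ≫ F.map f = F.map (singHom S j ≫ f) ≫ 𝟙 _ := by
    rw [Category.comp_id, F.map_comp]
  rw [elemwise h1, Subsingleton.elim (singHom S j ≫ f)
    (singHom T ⟨j.val, leOfHom f j.2⟩)]
  rfl

/-- The right adjoint's value on a reduced cube `F`: natural families of maps
`Δ^S → F(S)` hitting the canonical points at the vertices. -/
noncomputable def Rn (n : ℕ)
    (F : ObjectProperty.FullSubcategory (IsReducedCube (C := TopCat) (n := n))) : TopCat :=
  TopCat.of {φ : ∀ S : PosetP0 n, C(↑(simplexOn n S.val), ↑(F.obj.obj S)) //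
    (∀ (S : PosetP0 n) (j : ↥S.val), φ S (vertexPt S j) = cPt F.obj F.property S j) ∧
    ∀ ⦃S T : PosetP0 n⦄ (f : S ⟶ T) (t : ↑(simplexOn n S.val)),
      φ T (faceIncl (leOfHom f) t) = F.obj.map f (φ S t)}

variable {X : TopCat} {F : ObjectProperty.FullSubcategory (IsReducedCube (C := TopCat) (n := n))}

theorem joinCube_map_inl {S T : PosetP0 n} (f : S ⟶ T) (j : ↑(vert n S)) :
    (joinCube n X).map f (pushout.inl (spanProj n X S) (spanIncl n X S) j) =
      pushout.inl (spanProj n X T) (spanIncl n X T) (vertMap f j) := by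
  have h : pushout.inl (spanProj n X S) (spanIncl n X S) ≫ (joinCube n X).map f =
      vertMap f ≫ pushout.inl (spanProj n X T) (spanIncl n X T) :=
    pushout.inl_desc _ _ _
  exact elemwise h j

theorem joinCube_map_inr {S T : PosetP0 n} (f : S ⟶ T) (p : ↑(prodSimplexObj n X S)) :
    (joinCube n X).map f (pushout.inr (spanProj n X S) (spanIncl n X S) p) =
      pushout.inr (spanProj n X T) (spanIncl n X T) (prodFaceMap n X f p) := by
  have h : pushout.inr (spanProj n X S) (spanIncl n X S) ≫ (joinCube n X).map f =
      prodFaceMap n X f ≫ pushout.inr (spanProj n X T) (spanIncl n X T) :=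
    pushout.inr_desc _ _ _
  exact elemwise h p

theorem inl_eq_inr (S : PosetP0 n) (x : ↑X) (j : ↥S.val) :
    pushout.inl (spanProj n X S) (spanIncl n X S) j =
      pushout.inr (spanProj n X S) (spanIncl n X S) (x, vertexPt S j) := by
  have h := elemwise (pushout.condition (f := spanProj n X S) (g := spanIncl n X S))
    ((x, j) : ↑(prodVertObj n X S))
  exact h

theorem psi_inl (ψ : joinCube n X ⟶ F.obj) (S : PosetP0 n) (j : ↥S.val) :
    ψ.app S (pushout.inl (spanProj n X S) (spanIncl n X S) j) =
      cPt F.obj F.property S j := by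
  have h1 := elemwise (ψ.naturality (singHom S j))
    (pushout.inl (spanProj n X (singletonObj n j.val))
      (spanIncl n X (singletonObj n j.val))
      (⟨j.val, Finset.mem_singleton_self j.val⟩ : ↑(vert n (singletonObj n j.val))))
  erw [joinCube_map_inl] at h1
  have h2 : vertMap (singHom S j)
      (⟨j.val, Finset.mem_singleton_self j.val⟩ : ↑(vert n (singletonObj n j.val))) = j :=
    Subtype.ext rfl
  rw [h2] at h1
  rw [h1, redPt_unique F.obj F.property j.val ((ψ.app (singletonObj n j.val))
    (pushout.inl (spanProj n X (singletonObj n j.val))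
      (spanIncl n X (singletonObj n j.val))
      (⟨j.val, Finset.mem_singleton_self j.val⟩ : ↑(vert n (singletonObj n j.val)))))]
  rfl

theorem psi_inr_vertex (ψ : joinCube n X ⟶ F.obj) (S : PosetP0 n)
    (x : ↑X) (j : ↥S.val) :
    ψ.app S (pushout.inr (spanProj n X S) (spanIncl n X S) (x, vertexPt S j)) =
      cPt F.obj F.property S j := by
  rw [← inl_eq_inr S x j]
  exact psi_inl ψ S j

theorem psi_inr_map (ψ : joinCube n X ⟶ F.obj) {S T : PosetP0 n} (f : S ⟶ T)
    (x : ↑X) (t : ↑(simplexOn n S.val)) :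
    ψ.app T (pushout.inr (spanProj n X T) (spanIncl n X T) (x, faceIncl (leOfHom f) t)) =
      F.obj.map f (ψ.app S (pushout.inr (spanProj n X S) (spanIncl n X S) (x, t))) := by
  have h1 := elemwise (ψ.naturality f)
    (pushout.inr (spanProj n X S) (spanIncl n X S) (x, t))
  erw [joinCube_map_inr] at h1
  exact h1

end Aux3
section Aux4

instance t2Simplex (n : ℕ) (S : Finset (Fin (n + 1))) : T2Space ↑(simplexOn n S) :=
  show T2Space {t : Fin (n + 1) → ℝ //
    (∀ i, 0 ≤ t i) ∧ (∀ i, i ∉ S → t i = 0) ∧ ∑ i, t i = 1} from inferInstance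

instance lcSimplex (n : ℕ) (S : Finset (Fin (n + 1))) :
    LocallyCompactSpace ↑(simplexOn n S) := inferInstance

variable {n : ℕ}

/-- The forward direction of the adjunction bijection. -/
noncomputable def fwd (X : TopCat)
    (F : ObjectProperty.FullSubcategory (IsReducedCube (C := TopCat) (n := n)))
    (ψ : joinCube n X ⟶ F.obj) : X ⟶ Rn n F :=
  TopCat.ofHom ⟨fun x =>
    ⟨fun S => (ContinuousMap.curry
        ((pushout.inr (spanProj n X S) (spanIncl n X S) ≫ ψ.app S :
          prodSimplexObj n X S ⟶ F.obj.obj S).hom :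
          C(↑X × ↑(simplexOn n S.val), ↑(F.obj.obj S)))) x,
      fun S j => psi_inr_vertex ψ S x j,
      fun S T f t => psi_inr_map ψ f x t⟩,
    by
      apply Continuous.subtype_mk
      exact continuous_pi fun S => (ContinuousMap.continuous _)⟩

/-- The backward direction of the adjunction bijection, componentwise. -/
noncomputable def bwdApp (X : TopCat)
    (F : ObjectProperty.FullSubcategory (IsReducedCube (C := TopCat) (n := n)))
    (h : X ⟶ Rn n F) (S : PosetP0 n) :
    pushout (spanProj n X S) (spanIncl n X S) ⟶ F.obj.obj S :=
  pushout.desc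
    (ConcreteCategory.ofHom (C := TopCat) (X := vert n S) ⟨fun j => cPt F.obj F.property S j, continuous_bot⟩)
    (TopCat.ofHom <| ContinuousMap.uncurry
      ⟨fun x => (h x).1 S,
        (continuous_apply S).comp (continuous_subtype_val.comp h.hom.continuous)⟩)
    (by
      ext ⟨x, j⟩
      exact ((h x).2.1 S j).symm)

theorem bwdApp_inl (X : TopCat)
    (F : ObjectProperty.FullSubcategory (IsReducedCube (C := TopCat) (n := n)))
    (h : X ⟶ Rn n F) (S : PosetP0 n) (j : ↑(vert n S)) :
    bwdApp X F h S (pushout.inl (spanProj n X S) (spanIncl n X S) j) =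
      cPt F.obj F.property S j := by
  have h1 : pushout.inl (spanProj n X S) (spanIncl n X S) ≫ bwdApp X F h S =
      (ConcreteCategory.ofHom (C := TopCat) (X := vert n S) ⟨fun j => cPt F.obj F.property S j, continuous_bot⟩ :
        vert n S ⟶ F.obj.obj S) ≫ 𝟙 _ := by
    rw [Category.comp_id]
    unfold bwdApp
    exact pushout.inl_desc _ _ _
  exact elemwise h1 j

theorem bwdApp_inr (X : TopCat)
    (F : ObjectProperty.FullSubcategory (IsReducedCube (C := TopCat) (n := n)))
    (h : X ⟶ Rn n F) (S : PosetP0 n) (x : ↑X) (t : ↑(simplexOn n S.val)) :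
    bwdApp X F h S (pushout.inr (spanProj n X S) (spanIncl n X S) (x, t)) =
      (h x).1 S t := by
  have h1 : pushout.inr (spanProj n X S) (spanIncl n X S) ≫ bwdApp X F h S =
      (TopCat.ofHom (ContinuousMap.uncurry
        ⟨fun x => (h x).1 S,
          (continuous_apply S).comp (continuous_subtype_val.comp h.hom.continuous)⟩) :
        prodSimplexObj n X S ⟶ F.obj.obj S) ≫ 𝟙 _ := by
    rw [Category.comp_id]
    unfold bwdApp
    exact pushout.inr_desc _ _ _
  exact elemwise h1 ((x, t) : ↑(prodSimplexObj n X S))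

/-- The backward direction of the adjunction bijection. -/
noncomputable def bwd (X : TopCat)
    (F : ObjectProperty.FullSubcategory (IsReducedCube (C := TopCat) (n := n)))
    (h : X ⟶ Rn n F) : joinCube n X ⟶ F.obj where
  app S := bwdApp X F h S
  naturality := by
    intro S T f
    apply pushout.hom_ext
    · ext j
      show bwdApp X F h T ((joinCube n X).map f
          (pushout.inl (spanProj n X S) (spanIncl n X S) j)) =
        F.obj.map f (bwdApp X F h S (pushout.inl (spanProj n X S) (spanIncl n X S) j))
      rw [joinCube_map_inl, bwdApp_inl, bwdApp_inl]
      exact (cPt_map F.obj F.property f j).symm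
    · ext ⟨x, t⟩
      show bwdApp X F h T ((joinCube n X).map f
          (pushout.inr (spanProj n X S) (spanIncl n X S) (x, t))) =
        F.obj.map f (bwdApp X F h S (pushout.inr (spanProj n X S) (spanIncl n X S) (x, t)))
      erw [joinCube_map_inr]
      show bwdApp X F h T (pushout.inr (spanProj n X T) (spanIncl n X T)
          (x, faceIncl (leOfHom f) t)) =
        F.obj.map f (bwdApp X F h S (pushout.inr (spanProj n X S) (spanIncl n X S) (x, t)))
      rw [bwdApp_inr, bwdApp_inr, (h x).2.2 f t]

/-- The adjunction bijection. -/
noncomputable def joinHomEquiv (X : TopCat)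
    (F : ObjectProperty.FullSubcategory (IsReducedCube (C := TopCat) (n := n))) :
    (joinCube n X ⟶ F.obj) ≃ (X ⟶ Rn n F) where
  toFun := fwd X F
  invFun := bwd X F
  left_inv ψ := by
    apply NatTrans.ext
    funext S
    apply pushout.hom_ext
    · ext j
      show bwdApp X F (fwd X F ψ) S (pushout.inl (spanProj n X S) (spanIncl n X S) j) =
        ψ.app S (pushout.inl (spanProj n X S) (spanIncl n X S) j)
      rw [bwdApp_inl]; exact (psi_inl ψ S j).symm
    · ext ⟨x, t⟩
      show bwdApp X F (fwd X F ψ) S (pushout.inr (spanProj n X S) (spanIncl n X S) (x, t)) =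
        ψ.app S (pushout.inr (spanProj n X S) (spanIncl n X S) (x, t))
      rw [bwdApp_inr]
      rfl
  right_inv h := by
    ext x
    refine Subtype.ext (funext fun S => ?_)
    ext t
    show bwdApp X F h S (pushout.inr (spanProj n X S) (spanIncl n X S) (x, t)) = (h x).1 S t
    rw [bwdApp_inr]

end Aux4
section Aux5

variable {n : ℕ}

theorem joinCubeMap_inr {X Y : TopCat} (f : X ⟶ Y) (S : PosetP0 n)
    (p : ↑(prodSimplexObj n X S)) :
    (joinCubeMap n f).app S (pushout.inr (spanProj n X S) (spanIncl n X S) p) =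
      pushout.inr (spanProj n Y S) (spanIncl n Y S) (prodSimplexLeft n f S p) := by
  have h : pushout.inr (spanProj n X S) (spanIncl n X S) ≫ (joinCubeMap n f).app S =
      prodSimplexLeft n f S ≫ pushout.inr (spanProj n Y S) (spanIncl n Y S) :=
    pushout.inr_desc _ _ _
  exact elemwise h p

end Aux5
/-- the join functor `L_n : TopCat ⥤ RedFun_n`, sending `X` to the reduced
punctured cube `S ↦ X ∗ S` (the pushout join model, with structure maps induced by the
face inclusions and the inclusions `S ↪ T`), admits a right adjoint `R_n`. -/
theorem joinFunctor_isLeftAdjoint (n : ℕ) :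
    ∃ Ln : TopCat ⥤ ObjectProperty.FullSubcategory (IsReducedCube (C := TopCat) (n := n)),
      Nonempty (Ln ⋙ ObjectProperty.ι (IsReducedCube (C := TopCat) (n := n)) ≅
        joinCubeFunctor n) ∧
      Ln.IsLeftAdjoint := by
  refine ⟨ObjectProperty.lift _ (joinCubeFunctor n) (joinCube_isReduced n), ⟨?_⟩, ?_⟩
  · exact ObjectProperty.liftCompιIso _ (joinCubeFunctor n) (joinCube_isReduced n)
  · have he : ∀ (X' X : TopCat) (F : ObjectProperty.FullSubcategory (IsReducedCube (C := TopCat) (n := n)))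
        (f : X' ⟶ X)
        (g : (ObjectProperty.lift _ (joinCubeFunctor n) (joinCube_isReduced n)).obj X ⟶ F),
        joinHomEquiv X' F
          ((ObjectProperty.lift _ (joinCubeFunctor n) (joinCube_isReduced n)).map f ≫ g).hom =
          f ≫ joinHomEquiv X F g.hom := by
      intro X' X F f g
      apply TopCat.ext
      intro x'
      refine Subtype.ext (funext fun S => ?_)
      apply ContinuousMap.ext
      intro t
      show g.hom.app S ((joinCubeMap n f).app S
          (pushout.inr (spanProj n X' S) (spanIncl n X' S) (x', t))) =
        g.hom.app S (pushout.inr (spanProj n X S) (spanIncl n X S) (f x', t))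
      exact congrArg (g.hom.app S) (joinCubeMap_inr f S (x', t))
    exact (Adjunction.adjunctionOfEquivRight
      (fun X F => (InducedCategory.homEquiv (X := (ObjectProperty.lift _ (joinCubeFunctor n)
        (joinCube_isReduced n)).obj X) (Y := F)).trans (joinHomEquiv X F)) he).isLeftAdjoint
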